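/- In a plane-oriented recursive tree on n nodes, for fixed 2 ≤ j ≤ n and 1 ≤ d ≤ n-j+1, the probability that node j has degree d is P(D_{n,j} = d) = [Γ(d)Γ(j - 1/2) / Γ(n - 1/2)] · Σ_{i=0}^{d-1} (-1)^i Γ(n - 1 - i/2) / (Γ(i+1) Γ(d-i) Γ(j - 1 - i/2)). -/

import Mathlib

open Finset Polynomial

lemma fwd_iter_poly_zero : ∀ (m : ℕ) (P : Polynomial ℝ), P.natDegree < m →
    (fwdDiff (1:ℝ))^[m] (fun x : ℝ => P.eval x) = 0 := by
  intro m
  induction m with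
  | zero => intro P h; exact absurd h (Nat.not_lt_zero _)
  | succ m ih =>
    intro P hP
    rw [Function.iterate_succ_apply]
    have hQ : fwdDiff (1:ℝ) (fun x : ℝ => P.eval x)
        = fun x : ℝ => (P.comp (X + 1) - P).eval x := by
      funext x
      simp [fwdDiff, eval_comp]
    rw [hQ]
    rcases eq_or_ne (P.comp (X + 1) - P) 0 with h0 | hne
    · rw [h0]
      have : (fun x : ℝ => (0 : Polynomial ℝ).eval x) = (0 : ℝ → ℝ) := by
        funext x; simp
      rw [this]
      apply Function.iterate_fixed
      funext x; simp [fwdDiff]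
    · apply ih
      have hd0 : P.natDegree ≠ 0 := by
        intro h
        obtain ⟨a, rfl⟩ := natDegree_eq_zero.mp h
        simp at hne
      have hP0 : P ≠ 0 := fun h => hd0 (by simp [h])
      have hnc : (P.comp (X + 1 : Polynomial ℝ)).natDegree = P.natDegree := by
        rw [natDegree_comp, ← C_1, natDegree_X_add_C, mul_one]
      have hp0 : P.comp (X + 1 : Polynomial ℝ) ≠ 0 := by
        intro h
        rw [h, natDegree_zero] at hnc
        exact hd0 hnc.symm
      have hdc : (P.comp (X + 1 : Polynomial ℝ)).degree = P.degree := by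
        rw [degree_eq_natDegree hp0, degree_eq_natDegree hP0, hnc]
      have hlc : (P.comp (X + 1 : Polynomial ℝ)).leadingCoeff = P.leadingCoeff := by
        rw [leadingCoeff_comp (by rw [← C_1, natDegree_X_add_C]; norm_num)]
        rw [← C_1, leadingCoeff_X_add_C]
        simp
      have h1 : (P.comp (X + 1) - P).degree < P.degree := by
        calc (P.comp (X + 1) - P).degree < (P.comp (X + 1 : Polynomial ℝ)).degree :=
              degree_sub_lt hdc hp0 hlc
          _ = P.degree := hdc
      have h2 := Polynomial.natDegree_lt_natDegree hne h1
      omega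

lemma alt_sum_poly (m : ℕ) (P : Polynomial ℝ) (h : P.natDegree < m) :
    ∑ i ∈ range (m + 1), (-1 : ℝ) ^ i * (m.choose i : ℝ) * P.eval (i:ℝ) = 0 := by
  have h0 := fwd_iter_poly_zero m P h
  have h1 := fwdDiff_iter_eq_sum_shift (1:ℝ) (fun x : ℝ => P.eval x) m (0:ℝ)
  rw [h0] at h1
  simp only [Pi.zero_apply, zsmul_eq_mul, smul_eq_mul, zero_add] at h1
  have h2 : ∑ i ∈ range (m + 1), (-1 : ℝ) ^ i * (m.choose i : ℝ) * P.eval (i:ℝ)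
      = (-1:ℝ)^m * ∑ k ∈ range (m + 1),
        (((-1 : ℤ) ^ (m - k) * (m.choose k) : ℤ) : ℝ) * P.eval ((k:ℕ) • (1:ℝ)) := by
    rw [Finset.mul_sum]
    apply Finset.sum_congr rfl
    intro k hk
    simp only [Finset.mem_range] at hk
    have hk' : k ≤ m := by omega
    have e : ((-1:ℝ))^(m-k) * (-1)^k = (-1)^m := by
      rw [← pow_add, Nat.sub_add_cancel hk']
    push_cast
    have e2 : ((k:ℕ) • (1:ℝ)) = (k:ℝ) := by simp
    rw [e2]
    have e3 : ((-1:ℝ))^(m-k) * (-1)^(m-k) = 1 := by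
      rw [← pow_add]; exact Even.neg_one_pow ⟨m - k, rfl⟩
    linear_combination ((m.choose k : ℝ) * P.eval (k:ℝ)) * ((-1:ℝ)^(m-k) * e - (-1:ℝ)^k * e3)
  rw [h2]
  rw [← h1]
  ring

lemma gamma_prod (c : ℝ) (hc : ∀ m : ℕ, c ≠ -m) (r : ℕ) :
    Real.Gamma (c + r) = (∏ k ∈ range r, (c + k)) * Real.Gamma c := by
  induction r with
  | zero => simp
  | succ r ih =>
    have h1 : c + ((r:ℕ)+1 : ℕ) = (c + r) + 1 := by push_cast; ring
    have h2 : c + (r:ℝ) ≠ 0 := fun h => hc r (by linarith)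
    rw [h1, Real.Gamma_add_one h2, ih, prod_range_succ]
    ring

lemma gamma_ratio (c : ℝ) (r : ℕ) (hop : ∀ m : ℕ, c = -m → m < r) :
    Real.Gamma (c + r) / Real.Gamma c = ∏ k ∈ range r, (c + k) := by
  by_cases h : ∀ m : ℕ, c ≠ -m
  · rw [gamma_prod c h r, mul_div_assoc, div_self (Real.Gamma_ne_zero h), mul_one]
  · push_neg at h
    obtain ⟨m0, hm0⟩ := h
    rw [hm0, Real.Gamma_neg_nat_eq_zero, div_zero]
    symm
    refine Finset.prod_eq_zero (Finset.mem_range.mpr (hop m0 hm0)) ?_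
    ring

noncomputable def Fc (j n d : ℕ) : ℝ :=
  Real.Gamma (d : ℝ) * Real.Gamma ((j : ℝ) - 1 / 2) / Real.Gamma ((n : ℝ) - 1 / 2) *
    ∑ i ∈ range d, (-1 : ℝ) ^ i * Real.Gamma ((n : ℝ) - 1 - (i : ℝ) / 2) /
      (Real.Gamma ((i : ℝ) + 1) * Real.Gamma ((d : ℝ) - (i : ℝ)) *
        Real.Gamma ((j : ℝ) - 1 - (i : ℝ) / 2))

lemma Fc_boundary_zero (j n : ℕ) (hj : 2 ≤ j) (hn : j ≤ n) : Fc j n (n - j + 2) = 0 := by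
  set r := n - j with hr
  set m := n - j + 1 with hm
  have hd : r + 2 = m + 1 := by omega
  set P : Polynomial ℝ := ∏ k ∈ range r, (Polynomial.C ((j:ℝ) - 1 + k) -
      Polynomial.C (2⁻¹ : ℝ) * Polynomial.X) with hP
  have hdeg : P.natDegree < m := by
    have h1 : P.natDegree ≤ ∑ k ∈ range r, 1 := by
      refine le_trans (Polynomial.natDegree_prod_le _ _) (Finset.sum_le_sum ?_)
      intro k _
      refine le_trans (Polynomial.natDegree_sub_le _ _) ?_
      simp only [Polynomial.natDegree_C, max_le_iff]
      exact ⟨Nat.zero_le _, le_trans (Polynomial.natDegree_C_mul_le _ _) Polynomial.natDegree_X_le⟩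
    simp only [Finset.sum_const, card_range, smul_eq_mul, mul_one] at h1
    omega
  have heval : ∀ i : ℕ, P.eval (i:ℝ) = ∏ k ∈ range r, ((j:ℝ) - 1 - (i:ℝ)/2 + k) := by
    intro i
    rw [hP, Polynomial.eval_prod]
    refine Finset.prod_congr rfl fun k _ => ?_
    simp only [Polynomial.eval_sub, Polynomial.eval_mul, Polynomial.eval_C, Polynomial.eval_X]
    ring
  have hterm : ∀ i ∈ range (m+1),
      (-1 : ℝ) ^ i * Real.Gamma ((n : ℝ) - 1 - (i : ℝ) / 2) /
        (Real.Gamma ((i : ℝ) + 1) * Real.Gamma (((m+1 : ℕ) : ℝ) - (i : ℝ)) *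
          Real.Gamma ((j : ℝ) - 1 - (i : ℝ) / 2))
      = ((-1 : ℝ) ^ i * (m.choose i : ℝ) * P.eval (i:ℝ)) * ((Nat.factorial m : ℕ) : ℝ)⁻¹ := by
    intro i hi
    have him : i ≤ m := by simpa [Nat.lt_succ_iff] using hi
    have e1 : Real.Gamma ((i : ℝ) + 1) = (i.factorial : ℝ) := Real.Gamma_nat_eq_factorial i
    have e2 : Real.Gamma (((m+1 : ℕ) : ℝ) - (i : ℝ)) = ((m - i).factorial : ℝ) := by
      have : (((m+1 : ℕ) : ℝ) - (i : ℝ)) = (((m - i : ℕ) : ℝ) + 1) := by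
        push_cast [Nat.cast_sub him]; ring
      rw [this, Real.Gamma_nat_eq_factorial]
    have e3 : Real.Gamma ((n : ℝ) - 1 - (i : ℝ) / 2) /
        Real.Gamma ((j : ℝ) - 1 - (i : ℝ) / 2) = P.eval (i:ℝ) := by
      have hts : (n : ℝ) - 1 - (i:ℝ)/2 = ((j:ℝ) - 1 - (i:ℝ)/2) + (r : ℕ) := by
        push_cast [Nat.cast_sub hn, hr]; ring
      rw [hts, gamma_ratio _ r ?_, heval i]
      intro m0 hm0
      have hi2 : (i : ℝ) = ((2*(j+m0) - 2 : ℕ) : ℝ) := by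
        push_cast [Nat.cast_sub (show 2 ≤ 2*(j+m0) by omega)]
        linarith
      have hi3 : i = 2*(j+m0) - 2 := Nat.cast_injective hi2
      omega
    rw [e1, e2]
    have hCf : ((m.choose i : ℕ) : ℝ) * ((Nat.factorial i : ℕ) : ℝ) * ((Nat.factorial (m-i) : ℕ) : ℝ)
        = ((Nat.factorial m : ℕ) : ℝ) := by
      exact_mod_cast congrArg (Nat.cast : ℕ → ℝ)
        (Nat.choose_mul_factorial_mul_factorial him)
    have h1 : ((Nat.factorial i : ℕ) : ℝ) ≠ 0 := Nat.cast_ne_zero.mpr (Nat.factorial_ne_zero _)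
    have h2 : ((Nat.factorial (m-i) : ℕ) : ℝ) ≠ 0 := Nat.cast_ne_zero.mpr (Nat.factorial_ne_zero _)
    have h3 : ((Nat.factorial m : ℕ) : ℝ) ≠ 0 := Nat.cast_ne_zero.mpr (Nat.factorial_ne_zero _)
    have hkey : ((i.factorial : ℝ))⁻¹ * (((m-i).factorial : ℝ))⁻¹
        = (m.choose i : ℝ) * ((m.factorial : ℝ))⁻¹ := by
      field_simp
      linear_combination -hCf
    calc (-1 : ℝ) ^ i * Real.Gamma ((n : ℝ) - 1 - (i : ℝ) / 2) /
          ((i.factorial : ℝ) * ((m-i).factorial : ℝ) *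
            Real.Gamma ((j : ℝ) - 1 - (i : ℝ) / 2))
        = ((-1 : ℝ) ^ i * Real.Gamma ((n : ℝ) - 1 - (i : ℝ) / 2) *
            (Real.Gamma ((j : ℝ) - 1 - (i : ℝ) / 2))⁻¹) *
            (((i.factorial : ℝ))⁻¹ * (((m-i).factorial : ℝ))⁻¹) := by
          rw [div_eq_mul_inv, mul_inv, mul_inv]; ring
      _ = ((-1 : ℝ) ^ i * Real.Gamma ((n : ℝ) - 1 - (i : ℝ) / 2) *
            (Real.Gamma ((j : ℝ) - 1 - (i : ℝ) / 2))⁻¹) *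
            ((m.choose i : ℝ) * ((m.factorial : ℝ))⁻¹) := by rw [hkey]
      _ = (-1 : ℝ) ^ i * (m.choose i : ℝ) *
            (Real.Gamma ((n : ℝ) - 1 - (i : ℝ) / 2) /
              Real.Gamma ((j : ℝ) - 1 - (i : ℝ) / 2)) * ((m.factorial : ℝ))⁻¹ := by
          rw [div_eq_mul_inv]; ring
      _ = ((-1 : ℝ) ^ i * (m.choose i : ℝ) * P.eval (i:ℝ)) * ((Nat.factorial m : ℕ) : ℝ)⁻¹ := by
          rw [e3]
  unfold Fc
  rw [hd]
  rw [Finset.sum_congr rfl hterm, ← Finset.sum_mul, alt_sum_poly m P hdeg, zero_mul, mul_zero]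

lemma Fc_rec (j n d : ℕ) (hj : 2 ≤ j) (hn : j ≤ n) (hd : 1 ≤ d) (hdn : d ≤ n - j + 2) :
    Fc j (n+1) d = ((d:ℝ) - 1) / (2 * ((n+1 : ℕ) : ℝ) - 3) * Fc j n (d-1) +
      (2 * ((n+1 : ℕ) : ℝ) - 3 - (d:ℝ)) / (2 * ((n+1 : ℕ) : ℝ) - 3) * Fc j n d := by
  have hn2 : (2:ℝ) ≤ (n:ℝ) := by exact_mod_cast le_trans hj hn
  have hB0 : (0:ℝ) < (n:ℝ) - 1/2 := by linarith
  have hB : Real.Gamma ((n:ℝ) - 1/2) ≠ 0 := ne_of_gt (Real.Gamma_pos_of_pos hB0)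
  have hdc : ((d-1 : ℕ) : ℝ) = (d:ℝ) - 1 := by
    rw [Nat.cast_sub hd, Nat.cast_one]
  unfold Fc
  simp only [Nat.cast_add, Nat.cast_one, hdc]
  have hext : ∑ i ∈ range (d-1), (-1 : ℝ) ^ i * Real.Gamma ((n : ℝ) - 1 - (i : ℝ) / 2) /
        (Real.Gamma ((i : ℝ) + 1) * Real.Gamma ((d : ℝ) - 1 - (i : ℝ)) *
          Real.Gamma ((j : ℝ) - 1 - (i : ℝ) / 2))
      = ∑ i ∈ range d, (-1 : ℝ) ^ i * Real.Gamma ((n : ℝ) - 1 - (i : ℝ) / 2) /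
        (Real.Gamma ((i : ℝ) + 1) * Real.Gamma ((d : ℝ) - 1 - (i : ℝ)) *
          Real.Gamma ((j : ℝ) - 1 - (i : ℝ) / 2)) := by
    refine Finset.sum_subset ?_ ?_
    · exact Finset.range_subset_range.mpr (by omega)
    · intro x hx hnx
      simp only [Finset.mem_range] at hx hnx
      have hxd : x = d - 1 := by omega
      have hxR : (x:ℝ) = (d:ℝ) - 1 := by rw [hxd, hdc]
      rw [show (d:ℝ) - 1 - (x:ℝ) = 0 by rw [hxR]; ring, Real.Gamma_zero]
      simp
  rw [hext]
  set G : ℕ → ℝ := fun i => Real.Gamma ((j : ℝ) - 1 - (i : ℝ) / 2) with hGdef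
  set S1 := ∑ i ∈ range d, (-1 : ℝ) ^ i * Real.Gamma ((n : ℝ) + 1 - 1 - (i : ℝ) / 2) /
      (Real.Gamma ((i : ℝ) + 1) * Real.Gamma ((d : ℝ) - (i : ℝ)) * G i) with hS1
  set S2 := ∑ i ∈ range d, (-1 : ℝ) ^ i * Real.Gamma ((n : ℝ) - 1 - (i : ℝ) / 2) /
      (Real.Gamma ((i : ℝ) + 1) * Real.Gamma (((d : ℝ) - 1) - (i : ℝ)) * G i) with hS2
  set S3 := ∑ i ∈ range d, (-1 : ℝ) ^ i * Real.Gamma ((n : ℝ) - 1 - (i : ℝ) / 2) /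
      (Real.Gamma ((i : ℝ) + 1) * Real.Gamma ((d : ℝ) - (i : ℝ)) * G i) with hS3
  have key : ∀ i ∈ range d,
      2 * Real.Gamma (d:ℝ) * ((-1 : ℝ) ^ i * Real.Gamma ((n : ℝ) + 1 - 1 - (i : ℝ) / 2) /
        (Real.Gamma ((i : ℝ) + 1) * Real.Gamma ((d : ℝ) - (i : ℝ)) * G i))
      = ((d:ℝ) - 1) * Real.Gamma ((d:ℝ) - 1) *
          ((-1 : ℝ) ^ i * Real.Gamma ((n : ℝ) - 1 - (i : ℝ) / 2) /
            (Real.Gamma ((i : ℝ) + 1) * Real.Gamma (((d : ℝ) - 1) - (i : ℝ)) * G i))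
        + (2 * (n:ℝ) - 1 - (d:ℝ)) * Real.Gamma (d:ℝ) *
          ((-1 : ℝ) ^ i * Real.Gamma ((n : ℝ) - 1 - (i : ℝ) / 2) /
            (Real.Gamma ((i : ℝ) + 1) * Real.Gamma ((d : ℝ) - (i : ℝ)) * G i)) := by
    intro i hi
    simp only [Finset.mem_range] at hi
    have hinat : i ≤ n - 1 := by omega
    have hiR : (i:ℝ) ≤ (n:ℝ) - 1 := by
      rw [show (n:ℝ) - 1 = ((n-1 : ℕ) : ℝ) by rw [Nat.cast_sub (by omega), Nat.cast_one]]
      exact_mod_cast hinat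
    have hx : (n:ℝ) - 1 - (i:ℝ)/2 ≠ 0 := by
      have : (n:ℝ) - 1 - (i:ℝ)/2 ≥ ((n:ℝ) - 1)/2 := by linarith
      have h2 : (0:ℝ) < (n:ℝ) - 1 - (i:ℝ)/2 := by linarith
      exact ne_of_gt h2
    rw [show (n:ℝ) + 1 - 1 - (i:ℝ)/2 = ((n:ℝ) - 1 - (i:ℝ)/2) + 1 by ring,
      Real.Gamma_add_one hx]
    by_cases hieq : i = d - 1
    · have hiR2 : (i:ℝ) = (d:ℝ) - 1 := by rw [hieq, hdc]
      rw [hiR2, show (d:ℝ) - 1 - ((d:ℝ) - 1) = 0 by ring, Real.Gamma_zero]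
      simp only [mul_zero, zero_mul, div_zero]
      ring
    · have hd2 : 2 ≤ d := by omega
      have hdR1 : (d:ℝ) - 1 ≠ 0 := by
        have : (2:ℝ) ≤ (d:ℝ) := by exact_mod_cast hd2
        intro h; linarith
      have hile : i ≤ d - 2 := by omega
      have hiR3 : (i:ℝ) ≤ (d:ℝ) - 2 := by
        rw [show (d:ℝ) - 2 = ((d-2 : ℕ) : ℝ) by rw [Nat.cast_sub hd2]; norm_num]
        exact_mod_cast hile
      have hdipos : (0:ℝ) < (d:ℝ) - 1 - (i:ℝ) := by linarith
      have hdi : (d:ℝ) - 1 - (i:ℝ) ≠ 0 := ne_of_gt hdipos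
      have hGd : Real.Gamma (d:ℝ) = ((d:ℝ) - 1) * Real.Gamma ((d:ℝ) - 1) := by
        conv_lhs => rw [show (d:ℝ) = ((d:ℝ) - 1) + 1 by ring]
        rw [Real.Gamma_add_one hdR1]
      have hGdi : Real.Gamma ((d:ℝ) - (i:ℝ)) =
          ((d:ℝ) - 1 - (i:ℝ)) * Real.Gamma ((d:ℝ) - 1 - (i:ℝ)) := by
        conv_lhs => rw [show (d:ℝ) - (i:ℝ) = ((d:ℝ) - 1 - (i:ℝ)) + 1 by ring]
        rw [Real.Gamma_add_one hdi]
      rw [hGd, hGdi]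
      rw [show (((d:ℝ) - 1) - (i:ℝ)) = (d:ℝ) - 1 - (i:ℝ) by ring]
      by_cases hG : G i = 0
      · simp [hG]
      · have hGi1 : Real.Gamma ((i:ℝ) + 1) ≠ 0 :=
          ne_of_gt (Real.Gamma_pos_of_pos (by positivity))
        have hGdi2 : Real.Gamma ((d:ℝ) - 1 - (i:ℝ)) ≠ 0 :=
          ne_of_gt (Real.Gamma_pos_of_pos hdipos)
        field_simp
        ring
  have hkey : 2 * Real.Gamma (d:ℝ) * S1
      = ((d:ℝ) - 1) * Real.Gamma ((d:ℝ) - 1) * S2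
        + (2 * (n:ℝ) - 1 - (d:ℝ)) * Real.Gamma (d:ℝ) * S3 := by
    rw [hS1, hS2, hS3, Finset.mul_sum, Finset.mul_sum, Finset.mul_sum,
      ← Finset.sum_add_distrib]
    exact Finset.sum_congr rfl key
  have hGn1 : Real.Gamma ((n:ℝ) + 1 - 1/2) = ((n:ℝ) - 1/2) * Real.Gamma ((n:ℝ) - 1/2) := by
    conv_lhs => rw [show (n:ℝ) + 1 - 1/2 = ((n:ℝ) - 1/2) + 1 by ring]
    rw [Real.Gamma_add_one (ne_of_gt hB0)]
  rw [hGn1]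
  rw [show (2:ℝ) * ((n:ℝ) + 1) - 3 = 2 * ((n:ℝ) - 1/2) by ring]
  set a := (n:ℝ) - 1/2 with hadef
  set B := Real.Gamma a with hBdef
  set A := Real.Gamma ((j:ℝ) - 1/2) with hAdef
  set Gd := Real.Gamma (d:ℝ) with hGddef
  set Gd1 := Real.Gamma ((d:ℝ) - 1) with hGd1def
  have ha : a ≠ 0 := ne_of_gt hB0
  have h2a : 2 * a ≠ 0 := by simp [ha]
  field_simp
  linear_combination A * hkey - 2 * A * Gd * S3 * hadef

open Finset in
/-- Degree distribution of node `j` (for `2 ≤ j ≤ n`) in a PORT.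
`p m d` denotes `P(D_{m,j} = d)`.  At time `j`, node `j` has degree 1, and the
probabilities evolve by `P(D_{m,j}=d) = ((d-1)/(2m-3)) P(D_{m-1,j}=d-1)
+ ((2m-3-d)/(2m-3)) P(D_{m-1,j}=d)`.  The closed form is
`[Γ(d)Γ(j-1/2)/Γ(n-1/2)] Σ_{i=0}^{d-1} (-1)^i Γ(n-1-i/2)/(Γ(i+1)Γ(d-i)Γ(j-1-i/2))`. -/
theorem port_degree_pmf (j n : ℕ) (hj : 2 ≤ j) (hjn : j ≤ n)
    (p : ℕ → ℕ → ℝ)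
    (hinit : ∀ d : ℕ, p j d = if d = 1 then 1 else 0)
    (hrec : ∀ m d : ℕ, j < m → 1 ≤ d →
      p m d = ((d : ℝ) - 1) / (2 * (m : ℝ) - 3) * p (m - 1) (d - 1) +
        (2 * (m : ℝ) - 3 - (d : ℝ)) / (2 * (m : ℝ) - 3) * p (m - 1) d) :
    ∀ d : ℕ, 1 ≤ d → d ≤ n - j + 1 →
      p n d = Real.Gamma (d : ℝ) * Real.Gamma ((j : ℝ) - 1 / 2) / Real.Gamma ((n : ℝ) - 1 / 2) *
        ∑ i ∈ range d, (-1 : ℝ) ^ i * Real.Gamma ((n : ℝ) - 1 - (i : ℝ) / 2) /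
          (Real.Gamma ((i : ℝ) + 1) * Real.Gamma ((d : ℝ) - (i : ℝ)) *
            Real.Gamma ((j : ℝ) - 1 - (i : ℝ) / 2)) := by
  have hvan : ∀ n', j ≤ n' → ∀ d', n' - j + 1 < d' → p n' d' = 0 := by
    intro n' hn'
    induction n', hn' using Nat.le_induction with
    | base =>
      intro d' hd'
      rw [hinit, if_neg (by omega)]
    | succ m hm ih =>
      intro d' hd'
      rw [hrec (m+1) d' (by omega) (by omega)]
      simp only [Nat.add_sub_cancel]
      rw [ih (d'-1) (by omega), ih d' (by omega), mul_zero, mul_zero, add_zero]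
  have hmain : ∀ n', j ≤ n' → ∀ d', 1 ≤ d' → d' ≤ n' - j + 1 → p n' d' = Fc j n' d' := by
    intro n' hn'
    induction n', hn' using Nat.le_induction with
    | base =>
      intro d' h1 h2
      have hd1 : d' = 1 := by omega
      subst hd1
      rw [hinit, if_pos rfl]
      have hjR : (2:ℝ) ≤ (j:ℝ) := by exact_mod_cast hj
      have hA : Real.Gamma ((j:ℝ) - 1/2) ≠ 0 :=
        ne_of_gt (Real.Gamma_pos_of_pos (by linarith))
      have hjg : Real.Gamma ((j:ℝ) - 1) ≠ 0 :=
        ne_of_gt (Real.Gamma_pos_of_pos (by linarith))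
      unfold Fc
      rw [Finset.sum_range_one]
      simp only [Nat.cast_zero, Nat.cast_one, pow_zero, zero_div, sub_zero, zero_add,
        Real.Gamma_one, one_mul, mul_one]
      rw [div_self hA, one_mul, div_self hjg]
    | succ m hm ih =>
      intro d' h1 h2
      rw [hrec (m+1) d' (by omega) h1]
      simp only [Nat.add_sub_cancel]
      have e2 : p m d' = Fc j m d' := by
        by_cases hcase : d' ≤ m - j + 1
        · exact ih d' h1 hcase
        · have hd2 : d' = m - j + 2 := by omega
          rw [hd2, hvan m hm _ (by omega), Fc_boundary_zero j m hj hm]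
      have e1 : ((d':ℝ) - 1) / (2 * ((m+1:ℕ):ℝ) - 3) * p m (d'-1)
          = ((d':ℝ) - 1) / (2 * ((m+1:ℕ):ℝ) - 3) * Fc j m (d'-1) := by
        rcases eq_or_lt_of_le h1 with h | h
        · rw [← h]; norm_num
        · rw [ih (d'-1) (by omega) (by omega)]
      rw [e1, e2]
      exact (Fc_rec j m d' hj hm h1 (by omega)).symm
  intro d hd1 hd2
  have := hmain n hjn d hd1 hd2
  rw [this]
  unfold Fc
  rfl
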